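/- Let ν be a probability measure on ℝ with integrable identity of mean zero, ν((-∞,0)) = 1/2 = ν((0,∞)), and ν gives positive mass to (-∞,0) and (0,∞). Suppose θ = a·ω with a > 0 (perfectly correlated shocks). Let F > 0, H > 0, C be real numbers, set π_x(ω) = (B + a·ω)·F + ω·H − C for a real constant B, and let v < 0. Then the cross-partial N = v·[ (1/2)·∫_{(-∞,0)} π_x dν − (1/2)·∫_{(0,∞)} π_x dν ] is strictly positive; consequently, for any D < 0, ∂x*/∂γ = −N/D is strictly positive. (Proposition A.1: with perfectly correlated shocks and trigger 0 on either index, the optimal input increases with the payout when h'(x) > 0; when h'(x) < 0 the change is ambiguous.) -/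

import Mathlib

open MeasureTheory Set

/-- Proposition A.1: with perfectly correlated shocks θ = a·ω (a > 0), a
median-0 trigger (ν(−∞,0) = 1/2 = ν(0,∞), both with positive mass), marginal
profit π_x(ω) = (B + a·ω)·F + ω·H − C with F > 0 and H > 0 (risk-increasing
input), and concave utility (common second derivative v < 0), the
cross-partial N = v·[(1/2)·∫_{ω<0} π_x dν − (1/2)·∫_{ω>0} π_x dν] is strictly
positive; hence for any D < 0, ∂x*/∂γ = −N/D > 0: the optimal input increases
with the payout. -/
theorem stmt_14 (ν : Measure ℝ) [IsProbabilityMeasure ν]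
    (hInt : Integrable id ν) (hmean : ∫ ω, ω ∂ν = 0)
    (hmed1 : ν (Iio 0) = 1/2) (hmed2 : ν (Ioi 0) = 1/2)
    (hneg : 0 < ν (Iio 0)) (hpos : 0 < ν (Ioi 0))
    (a B F H C v : ℝ) (ha : 0 < a) (hF : 0 < F) (hH : 0 < H) (hv : v < 0)
    (N : ℝ)
    (hN : N = v * ((1/2) * ∫ ω in Iio (0 : ℝ), ((B + a * ω) * F + ω * H - C) ∂ν
            - (1/2) * ∫ ω in Ioi (0 : ℝ), ((B + a * ω) * F + ω * H - C) ∂ν)) :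
    0 < N ∧ ∀ D : ℝ, D < 0 → 0 < -N / D := by
  have hIntOn : ∀ s : Set ℝ, IntegrableOn (fun ω : ℝ => ω) s ν := fun s => hInt.integrableOn
  -- I₋ < 0
  have hneg' : (0 : ℝ) < ∫ ω in Iio (0:ℝ), -ω ∂ν := by
    rw [setIntegral_pos_iff_support_of_nonneg_ae]
    · refine hneg.trans_le (measure_mono ?_)
      intro x hx
      exact ⟨by simpa using (ne_of_lt hx), hx⟩
    · filter_upwards [ae_restrict_mem measurableSet_Iio] with x hx
      simp only [Pi.zero_apply, neg_nonneg]
      exact le_of_lt hx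
    · exact ((hIntOn (Iio 0)).neg)
  have hIm : (∫ ω in Iio (0:ℝ), ω ∂ν) < 0 := by
    have := hneg'
    rw [integral_neg] at this
    linarith
  -- split the mean
  have hsplit : (∫ ω in Iic (0:ℝ), ω ∂ν) + (∫ ω in Ioi (0:ℝ), ω ∂ν) = 0 := by
    rw [← hmean]
    exact intervalIntegral.integral_Iic_add_Ioi (hIntOn _) (hIntOn _)
  have hIic : (∫ ω in Iic (0:ℝ), ω ∂ν) = ∫ ω in Iio (0:ℝ), ω ∂ν := by
    have h1 : (Iic (0:ℝ)) = Iio 0 ∪ {0} := by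
      ext x; simp [le_iff_lt_or_eq]
    rw [h1, setIntegral_union (by simp) (measurableSet_singleton 0)
      (hIntOn _) (hIntOn _)]
    have h0 : (∫ ω in ({0} : Set ℝ), ω ∂ν) = 0 := by
      rw [show (fun ω : ℝ => ω) = id from rfl, integral_singleton]
      simp
    rw [h0, add_zero]
  have hIp : (∫ ω in Ioi (0:ℝ), ω ∂ν) = -∫ ω in Iio (0:ℝ), ω ∂ν := by
    rw [hIic] at hsplit; linarith
  -- compute set integrals of the affine integrand
  have key : ∀ s : Set ℝ, ν s = 1/2 →
      (∫ ω in s, ((B + a * ω) * F + ω * H - C) ∂ν)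
        = (B * F - C) * (1/2 : ℝ) + (a * F + H) * ∫ ω in s, ω ∂ν := by
    intro s hs
    have : ∀ ω : ℝ, (B + a * ω) * F + ω * H - C = (B * F - C) + (a * F + H) * ω :=
      fun ω => by ring
    simp_rw [this]
    rw [integral_add (integrable_const _) ((hIntOn s).const_mul _),
      integral_const_mul, setIntegral_const, measureReal_def, hs]
    norm_num
    ring
  have e1 := key (Iio 0) hmed1
  have e2 := key (Ioi 0) hmed2
  have hcoef : 0 < a * F + H := by positivity
  have hNpos : 0 < N := by
    rw [hN, e1, e2, hIp]
    nlinarith [mul_pos hcoef (neg_pos.mpr hIm)]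
  refine ⟨hNpos, fun D hD => div_pos_of_neg_of_neg (by linarith) hD⟩
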